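/- arXiv:2208.14656 — 3 statements merged into one kernel-verified Lean document; each statement's English description precedes it below -/
import Mathlib

section
/- (Quantitative semantics of until: positive robustness yields satisfaction of until.) Let g₁, g₂ : ℝ → ℝ and t, a, b : ℝ, and suppose that for every t' : ℝ the set g₁ '' Set.Icc t t' is bounded below. If sSup { x : ℝ | ∃ t' ∈ Set.Icc (t+a) (t+b), x = min (g₂ t') (sInf (g₁ '' Set.Icc t t')) } > 0, then there exists t' ∈ Set.Icc (t+a) (t+b) such that g₂ t' > 0 and g₁ t'' > 0 for every t'' ∈ Set.Icc t t'. -/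
/-- Quantitative semantics of until: positive robustness yields satisfaction
of until. -/
theorem until_robust (g₁ g₂ : ℝ → ℝ) (t a b : ℝ)
    (hbd : ∀ t' : ℝ, BddBelow (g₁ '' Set.Icc t t'))
    (h : sSup {x : ℝ | ∃ t' ∈ Set.Icc (t + a) (t + b),
          x = min (g₂ t') (sInf (g₁ '' Set.Icc t t'))} > 0) :
    ∃ t' ∈ Set.Icc (t + a) (t + b), g₂ t' > 0 ∧
      ∀ t'' ∈ Set.Icc t t', g₁ t'' > 0 := by
  set S := {x : ℝ | ∃ t' ∈ Set.Icc (t + a) (t + b),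
      x = min (g₂ t') (sInf (g₁ '' Set.Icc t t'))} with hS
  have hne : S.Nonempty := by
    by_contra hempty
    rw [Set.not_nonempty_iff_eq_empty] at hempty
    rw [hempty, Real.sSup_empty] at h
    exact lt_irrefl 0 h
  have hx : ∃ x ∈ S, 0 < x := by
    by_contra hc
    push_neg at hc
    have : sSup S ≤ 0 := Real.sSup_le (fun x hx => hc x hx) le_rfl
    linarith
  obtain ⟨x, ⟨t', ht', hxeq⟩, hxpos⟩ := hx
  refine ⟨t', ht', ?_, ?_⟩
  · have := lt_of_lt_of_le hxpos (hxeq ▸ min_le_left _ _)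
    exact this
  · intro t'' ht''
    have hinf : 0 < sInf (g₁ '' Set.Icc t t') :=
      lt_of_lt_of_le hxpos (hxeq ▸ min_le_right _ _)
    have : sInf (g₁ '' Set.Icc t t') ≤ g₁ t'' :=
      csInf_le (hbd t') ⟨t'', ht'', rfl⟩
    linarith
end

section
/- (Soundness of the quantitative semantics.) For every quantitative STL formula φ over S, every trace π : ℕ → S, and every time t : ℕ: if ρ(φ,π,t) > 0 then (π,t) ⊨ φ. -/
/-- Quantitative STL formulas over a type `S` of scenes: atoms carry a
real-valued function, and the bounded temporal operators carry bounds
`a b : ℕ` together with a proof that `a ≤ b`. -/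
inductive QSTL (S : Type) : Type where
  | atom : (S → ℝ) → QSTL S
  | neg : QSTL S → QSTL S
  | conj : QSTL S → QSTL S → QSTL S
  | disj : QSTL S → QSTL S → QSTL S
  | untl : (a b : ℕ) → a ≤ b → QSTL S → QSTL S → QSTL S
  | always : (a b : ℕ) → a ≤ b → QSTL S → QSTL S
  | eventually : (a b : ℕ) → a ≤ b → QSTL S → QSTL S
  | next : QSTL S → QSTL S

/-- Satisfaction `(π, t) ⊨ φ`. -/
def QSTL.Sat {S : Type} (π : ℕ → S) : ℕ → QSTL S → Prop
  | t, .atom g => g (π t) > 0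
  | t, .neg φ => ¬ QSTL.Sat π t φ
  | t, .conj φ ψ => QSTL.Sat π t φ ∧ QSTL.Sat π t ψ
  | t, .disj φ ψ => QSTL.Sat π t φ ∨ QSTL.Sat π t ψ
  | t, .untl a b _ φ ψ =>
      ∃ t', t + a ≤ t' ∧ t' ≤ t + b ∧ QSTL.Sat π t' ψ ∧
        ∀ t'', t ≤ t'' → t'' ≤ t' → QSTL.Sat π t'' φ
  | t, .always a b _ φ => ∀ t', t + a ≤ t' → t' ≤ t + b → QSTL.Sat π t' φ
  | t, .eventually a b _ φ => ∃ t', t + a ≤ t' ∧ t' ≤ t + b ∧ QSTL.Sat π t' φ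
  | t, .next φ => QSTL.Sat π (t + 1) φ

/-- The robustness `ρ(φ, π, t)` of the quantitative semantics. -/
def QSTL.rho {S : Type} (π : ℕ → S) : QSTL S → ℕ → ℝ
  | .atom g, t => g (π t)
  | .neg φ, t => - QSTL.rho π φ t
  | .conj φ ψ, t => min (QSTL.rho π φ t) (QSTL.rho π ψ t)
  | .disj φ ψ, t => max (QSTL.rho π φ t) (QSTL.rho π ψ t)
  | .untl a b h φ ψ, t =>
      (Finset.Icc (t + a) (t + b)).attach.sup'
        (Finset.attach_nonempty_iff.mpr
          (Finset.nonempty_Icc.mpr (Nat.add_le_add_left h t)))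
        (fun t' => min (QSTL.rho π ψ t'.1)
          ((Finset.Icc t t'.1).inf'
            (Finset.nonempty_Icc.mpr
              (le_trans (Nat.le_add_right t a) (Finset.mem_Icc.mp t'.2).1))
            (fun t'' => QSTL.rho π φ t'')))
  | .always a b h φ, t =>
      (Finset.Icc (t + a) (t + b)).inf'
        (Finset.nonempty_Icc.mpr (Nat.add_le_add_left h t))
        (fun t' => QSTL.rho π φ t')
  | .eventually a b h φ, t =>
      (Finset.Icc (t + a) (t + b)).sup'
        (Finset.nonempty_Icc.mpr (Nat.add_le_add_left h t))
        (fun t' => QSTL.rho π φ t')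
  | .next φ, t => QSTL.rho π φ (t + 1)


private lemma rho_sound_aux {S : Type} (π : ℕ → S) (φ : QSTL S) :
    ∀ t : ℕ, (QSTL.rho π φ t > 0 → QSTL.Sat π t φ) ∧
      (QSTL.rho π φ t < 0 → ¬ QSTL.Sat π t φ) := by
  induction φ with
  | atom g =>
      intro t
      constructor
      · intro h; exact h
      · intro h hs; simp [QSTL.Sat] at hs; simp [QSTL.rho] at h; linarith
  | neg φ ih =>
      intro t
      constructor
      · intro h
        have : QSTL.rho π φ t < 0 := by simp [QSTL.rho] at h; linarith
        exact (ih t).2 this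
      · intro h hs
        have : QSTL.rho π φ t > 0 := by simp [QSTL.rho] at h; linarith
        exact hs ((ih t).1 this)
  | conj φ ψ ihφ ihψ =>
      intro t
      constructor
      · intro h
        simp only [QSTL.rho, gt_iff_lt, lt_min_iff] at h
        exact ⟨(ihφ t).1 h.1, (ihψ t).1 h.2⟩
      · intro h hs
        simp only [QSTL.rho, min_lt_iff] at h
        rcases h with h | h
        · exact (ihφ t).2 h hs.1
        · exact (ihψ t).2 h hs.2
  | disj φ ψ ihφ ihψ =>
      intro t
      constructor
      · intro h
        simp only [QSTL.rho, gt_iff_lt, lt_max_iff] at h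
        rcases h with h | h
        · exact Or.inl ((ihφ t).1 h)
        · exact Or.inr ((ihψ t).1 h)
      · intro h hs
        simp only [QSTL.rho, max_lt_iff] at h
        rcases hs with hs | hs
        · exact (ihφ t).2 h.1 hs
        · exact (ihψ t).2 h.2 hs
  | untl a b hab φ ψ ihφ ihψ =>
      intro t
      constructor
      · intro h
        rw [QSTL.rho, gt_iff_lt, Finset.lt_sup'_iff] at h
        obtain ⟨⟨t', ht'⟩, -, hmin⟩ := h
        rw [lt_min_iff] at hmin
        obtain ⟨h2, h1⟩ := hmin
        rw [Finset.lt_inf'_iff] at h1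
        rw [Finset.mem_Icc] at ht'
        refine ⟨t', ht'.1, ht'.2, (ihψ t').1 h2, ?_⟩
        intro t'' h3 h4
        exact (ihφ t'').1 (h1 t'' (Finset.mem_Icc.mpr ⟨h3, h4⟩))
      · intro h hs
        rw [QSTL.rho, Finset.sup'_lt_iff] at h
        obtain ⟨t', h1, h2, h3, h4⟩ := hs
        have hmem : t' ∈ Finset.Icc (t + a) (t + b) := Finset.mem_Icc.mpr ⟨h1, h2⟩
        have := h ⟨t', hmem⟩ (Finset.mem_attach _ _)
        rw [min_lt_iff] at this
        rcases this with h5 | h5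
        · exact (ihψ t').2 h5 h3
        · rw [Finset.inf'_lt_iff] at h5
          obtain ⟨t'', ht'', h6⟩ := h5
          rw [Finset.mem_Icc] at ht''
          exact (ihφ t'').2 h6 (h4 t'' ht''.1 ht''.2)
  | always a b hab φ ih =>
      intro t
      constructor
      · intro h
        rw [QSTL.rho, gt_iff_lt, Finset.lt_inf'_iff] at h
        intro t' h1 h2
        exact (ih t').1 (h t' (Finset.mem_Icc.mpr ⟨h1, h2⟩))
      · intro h hs
        rw [QSTL.rho, Finset.inf'_lt_iff] at h
        obtain ⟨t', ht', h1⟩ := h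
        rw [Finset.mem_Icc] at ht'
        exact (ih t').2 h1 (hs t' ht'.1 ht'.2)
  | eventually a b hab φ ih =>
      intro t
      constructor
      · intro h
        rw [QSTL.rho, gt_iff_lt, Finset.lt_sup'_iff] at h
        obtain ⟨t', ht', h1⟩ := h
        rw [Finset.mem_Icc] at ht'
        exact ⟨t', ht'.1, ht'.2, (ih t').1 h1⟩
      · intro h hs
        rw [QSTL.rho, Finset.sup'_lt_iff] at h
        obtain ⟨t', h1, h2, h3⟩ := hs
        exact (ih t').2 (h t' (Finset.mem_Icc.mpr ⟨h1, h2⟩)) h3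
  | next φ ih =>
      intro t
      exact ⟨fun h => (ih (t + 1)).1 h, fun h hs => (ih (t + 1)).2 h hs⟩

/-- Soundness of the quantitative semantics: strictly positive robustness
implies satisfaction. -/
theorem rho_sound {S : Type} (φ : QSTL S) (π : ℕ → S) (t : ℕ)
    (h : QSTL.rho π φ t > 0) : QSTL.Sat π t φ := by
  exact (rho_sound_aux π φ t).1 h
end

section
/- (Completeness direction of the quantitative semantics.) For every quantitative STL formula φ over S, every trace π : ℕ → S, and every time t : ℕ: if (π,t) ⊨ φ then ρ(φ,π,t) ≥ 0. -/
theorem rho_aux {S : Type} (π : ℕ → S) (φ : QSTL S) : ∀ t : ℕ,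
    (QSTL.Sat π t φ → 0 ≤ QSTL.rho π φ t) ∧
    (¬ QSTL.Sat π t φ → QSTL.rho π φ t ≤ 0) := by
  induction φ with
  | atom g =>
    intro t
    constructor
    · intro h; exact le_of_lt h
    · intro h; exact le_of_not_gt h
  | neg φ ih =>
    intro t
    constructor
    · intro h
      simp only [QSTL.rho, neg_nonneg]
      exact (ih t).2 h
    · intro h
      simp only [QSTL.Sat, not_not] at h
      simp only [QSTL.rho, neg_nonpos]
      exact (ih t).1 h
  | conj φ ψ ih1 ih2 =>
    intro t
    constructor
    · rintro ⟨h1, h2⟩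
      exact le_min ((ih1 t).1 h1) ((ih2 t).1 h2)
    · intro h
      simp only [QSTL.Sat, not_and_or] at h
      rcases h with h | h
      · exact le_trans (min_le_left _ _) ((ih1 t).2 h)
      · exact le_trans (min_le_right _ _) ((ih2 t).2 h)
  | disj φ ψ ih1 ih2 =>
    intro t
    constructor
    · rintro (h | h)
      · exact le_trans ((ih1 t).1 h) (le_max_left _ _)
      · exact le_trans ((ih2 t).1 h) (le_max_right _ _)
    · intro h
      simp only [QSTL.Sat, not_or] at h
      exact max_le ((ih1 t).2 h.1) ((ih2 t).2 h.2)
  | untl a b hab φ ψ ih1 ih2 =>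
    intro t
    constructor
    · rintro ⟨t', h1, h2, hψ, hφ⟩
      have hmem : t' ∈ Finset.Icc (t + a) (t + b) := Finset.mem_Icc.mpr ⟨h1, h2⟩
      refine le_trans ?_ (Finset.le_sup'
        (f := fun t' : {x // x ∈ Finset.Icc (t + a) (t + b)} =>
          min (QSTL.rho π ψ t'.1)
            ((Finset.Icc t t'.1).inf'
              (Finset.nonempty_Icc.mpr
                (le_trans (Nat.le_add_right t a) (Finset.mem_Icc.mp t'.2).1))
              (fun t'' => QSTL.rho π φ t'')))
        (Finset.mem_attach _ ⟨t', hmem⟩))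
      refine le_min ((ih2 t').1 hψ) ?_
      apply Finset.le_inf'
      intro t'' ht''
      obtain ⟨hl, hr⟩ := Finset.mem_Icc.mp ht''
      exact (ih1 t'').1 (hφ t'' hl hr)
    · intro h
      simp only [QSTL.Sat, not_exists] at h
      push_neg at h
      apply Finset.sup'_le
      rintro ⟨t', hmem⟩ _
      obtain ⟨h1, h2⟩ := Finset.mem_Icc.mp hmem
      rcases Classical.em (QSTL.Sat π t' ψ) with hψ | hψ
      · obtain ⟨t'', ht1, ht2, hnφ⟩ := h t' h1 h2 hψ
        refine le_trans (min_le_right _ _) ?_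
        exact le_trans (Finset.inf'_le _ (Finset.mem_Icc.mpr ⟨ht1, ht2⟩))
          ((ih1 t'').2 hnφ)
      · exact le_trans (min_le_left _ _) ((ih2 t').2 hψ)
  | always a b hab φ ih =>
    intro t
    constructor
    · intro h
      apply Finset.le_inf'
      intro t' ht'
      obtain ⟨h1, h2⟩ := Finset.mem_Icc.mp ht'
      exact (ih t').1 (h t' h1 h2)
    · intro h
      simp only [QSTL.Sat] at h
      push_neg at h
      obtain ⟨t', h1, h2, hn⟩ := h
      exact le_trans (Finset.inf'_le _ (Finset.mem_Icc.mpr ⟨h1, h2⟩))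
        ((ih t').2 hn)
  | eventually a b hab φ ih =>
    intro t
    constructor
    · rintro ⟨t', h1, h2, hs⟩
      exact le_trans ((ih t').1 hs)
        (Finset.le_sup' _ (Finset.mem_Icc.mpr ⟨h1, h2⟩))
    · intro h
      simp only [QSTL.Sat] at h
      push_neg at h
      apply Finset.sup'_le
      intro t' ht'
      obtain ⟨h1, h2⟩ := Finset.mem_Icc.mp ht'
      exact (ih t').2 (h t' h1 h2)
  | next φ ih =>
    intro t
    exact ⟨fun h => (ih (t + 1)).1 h, fun h => (ih (t + 1)).2 h⟩

/-- Completeness direction of the quantitative semantics: satisfaction implies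
nonnegative robustness. -/
theorem rho_complete {S : Type} (φ : QSTL S) (π : ℕ → S) (t : ℕ)
    (h : QSTL.Sat π t φ) : QSTL.rho π φ t ≥ 0 :=
  (rho_aux π φ t).1 h
end
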